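/- For the complete bipartite graph K_{s,t}, the Sombor energy equals 2√(s³t + st³). -/

import Mathlib

open scoped Classical

noncomputable def somborMatrix {V : Type*} [Fintype V] (G : SimpleGraph V) :
    Matrix V V ℝ := fun i j =>
  if G.Adj i j then Real.sqrt ((G.degree i : ℝ) ^ 2 + (G.degree j : ℝ) ^ 2) else 0

lemma somborMatrix_isHermitian {V : Type*} [Fintype V] (G : SimpleGraph V) :
    (somborMatrix G).IsHermitian := by
  apply Matrix.ext
  intro i j
  simp only [Matrix.conjTranspose_apply, star_trivial, somborMatrix]
  rw [G.adj_comm, add_comm]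

/-- The Sombor eigenvalues of `G`. -/
noncomputable def somborEigs {V : Type*} [Fintype V] (G : SimpleGraph V) : V → ℝ :=
  (somborMatrix_isHermitian G).eigenvalues

/-- The Sombor spectral radius (largest Sombor eigenvalue). -/
noncomputable def somborSpecRad {V : Type*} [Fintype V] (G : SimpleGraph V) : ℝ :=
  ⨆ i, somborEigs G i

/-- The Sombor energy. -/
noncomputable def somborEnergy {V : Type*} [Fintype V] (G : SimpleGraph V) : ℝ :=
  ∑ i, |somborEigs G i|

/-- The Sombor Estrada index. -/
noncomputable def somborEstrada {V : Type*} [Fintype V] (G : SimpleGraph V) : ℝ :=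
  ∑ i, Real.exp (somborEigs G i)

/-- The forgotten topological index `F = ∑ d_i ^ 3`. -/
noncomputable def forgottenIndex {V : Type*} [Fintype V] (G : SimpleGraph V) : ℝ :=
  ∑ i, (G.degree i : ℝ) ^ 3

section helpers
open Matrix

lemma trace_sq_eq {n : Type*} [Fintype n] [DecidableEq n] {A : Matrix n n ℝ}
    (hA : A.IsHermitian) : (A * A).trace = ∑ i, hA.eigenvalues i ^ 2 := by
  conv_lhs => rw [hA.spectral_theorem, Unitary.conjStarAlgAut_apply]
  set U : Matrix n n ℝ := (hA.eigenvectorUnitary : Matrix n n ℝ)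
  set D : Matrix n n ℝ := Matrix.diagonal (RCLike.ofReal ∘ hA.eigenvalues)
  have hU : star U * U = 1 :=
    Matrix.mem_unitaryGroup_iff'.mp hA.eigenvectorUnitary.2
  have hE : (U * D * star U) * (U * D * star U) = U * (D * D) * star U := by
    rw [show U * D * star U * (U * D * star U) = U * D * (star U * U) * D * star U by
      noncomm_ring, hU]
    noncomm_ring
  rw [hE, Matrix.trace_mul_cycle, ← mul_assoc, hU, one_mul]
  simp [D, Matrix.diagonal_mul_diagonal, Matrix.trace_diagonal, sq]

lemma eig_cube {n : Type*} [Fintype n] [DecidableEq n] {A : Matrix n n ℝ}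
    (hA : A.IsHermitian) (k : ℝ) (h : A * A * A = k • A) (i : n) :
    hA.eigenvalues i ^ 3 = k * hA.eigenvalues i := by
  set v : n → ℝ := ⇑(hA.eigenvectorBasis i) with hv
  set l := hA.eigenvalues i with hl
  have hv1 : A *ᵥ v = l • v := hA.mulVec_eigenvectorBasis i
  have h3 : (A * A * A) *ᵥ v = (l ^ 3) • v := by
    rw [show l ^ 3 = l * (l * l) by ring]
    simp only [← Matrix.mulVec_mulVec, hv1, Matrix.mulVec_smul, smul_smul]
  rw [h, Matrix.smul_mulVec, hv1, smul_smul] at h3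
  have hvne : v ≠ 0 := by
    have h0 := hA.eigenvectorBasis.orthonormal.ne_zero i
    intro hc
    apply h0
    ext j
    exact congrFun hc j
  obtain ⟨j, hj⟩ := Function.ne_iff.mp hvne
  have h4 := congrFun h3 j
  simp only [Pi.smul_apply, smul_eq_mul] at h4
  exact (mul_right_cancel₀ hj h4).symm

end helpers

theorem stmt12 (s t : ℕ) :
    somborEnergy (completeBipartiteGraph (Fin s) (Fin t)) =
      2 * Real.sqrt ((s : ℝ) ^ 3 * t + (s : ℝ) * (t : ℝ) ^ 3) := by
  set G := completeBipartiteGraph (Fin s) (Fin t) with hG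
  set M := somborMatrix G with hMdef
  have hA := somborMatrix_isHermitian G
  set w : ℝ := Real.sqrt ((s : ℝ) ^ 2 + (t : ℝ) ^ 2) with hw
  have hwnn : 0 ≤ w := Real.sqrt_nonneg _
  -- degrees
  have hdl : ∀ a : Fin s, G.degree (Sum.inl a) = t := by
    intro a
    rw [← SimpleGraph.card_neighborFinset_eq_degree, SimpleGraph.neighborFinset_eq_filter]
    rw [Finset.card_filter, Fintype.sum_sum_type]
    simp [hG]
  have hdr : ∀ b : Fin t, G.degree (Sum.inr b) = s := by
    intro b
    rw [← SimpleGraph.card_neighborFinset_eq_degree, SimpleGraph.neighborFinset_eq_filter]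
    rw [Finset.card_filter, Fintype.sum_sum_type]
    simp [hG]
  -- entries
  have hlr : ∀ (a : Fin s) (b : Fin t), M (Sum.inl a) (Sum.inr b) = w := by
    intro a b
    simp only [hMdef, somborMatrix, hdl, hdr]
    rw [if_pos (by simp [hG]), add_comm]
  have hrl : ∀ (b : Fin t) (a : Fin s), M (Sum.inr b) (Sum.inl a) = w := by
    intro b a
    simp only [hMdef, somborMatrix, hdl, hdr]
    rw [if_pos (by simp [hG])]
  have hll : ∀ (a a' : Fin s), M (Sum.inl a) (Sum.inl a') = 0 := by
    intro a a'
    simp only [hMdef, somborMatrix]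
    rw [if_neg (by simp [hG])]
  have hrr : ∀ (b b' : Fin t), M (Sum.inr b) (Sum.inr b') = 0 := by
    intro b b'
    simp only [hMdef, somborMatrix]
    rw [if_neg (by simp [hG])]
  -- M squared
  have h2ll : ∀ (a a' : Fin s), (M * M) (Sum.inl a) (Sum.inl a') = t * w ^ 2 := by
    intro a a'
    rw [Matrix.mul_apply, Fintype.sum_sum_type]
    simp [hll, hlr, hrl, sq]
  have h2rr : ∀ (b b' : Fin t), (M * M) (Sum.inr b) (Sum.inr b') = s * w ^ 2 := by
    intro b b'
    rw [Matrix.mul_apply, Fintype.sum_sum_type]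
    simp [hrr, hlr, hrl, sq]
  have h2lr : ∀ (a : Fin s) (b : Fin t), (M * M) (Sum.inl a) (Sum.inr b) = 0 := by
    intro a b
    rw [Matrix.mul_apply, Fintype.sum_sum_type]
    simp [hll, hrr, hlr, hrl]
  have h2rl : ∀ (b : Fin t) (a : Fin s), (M * M) (Sum.inr b) (Sum.inl a) = 0 := by
    intro b a
    rw [Matrix.mul_apply, Fintype.sum_sum_type]
    simp [hll, hrr, hlr, hrl]
  set k : ℝ := (s : ℝ) * t * w ^ 2 with hk
  -- M cubed
  have h3 : M * M * M = k • M := by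
    ext i j
    rw [Matrix.mul_apply, Fintype.sum_sum_type]
    cases i <;> cases j <;>
      simp [h2ll, h2rr, h2lr, h2rl, hll, hrr, hlr, hrl, hk] <;> ring
  -- trace of M²
  have htr : (M * M).trace = 2 * k := by
    rw [Matrix.trace, Fintype.sum_sum_type]
    simp only [Matrix.diag_apply, h2ll, h2rr]
    simp [hk]
    ring
  have hsum : ∑ i, hA.eigenvalues i ^ 2 = 2 * k := by
    rw [← trace_sq_eq hA, htr]
  set c : ℝ := Real.sqrt ((s : ℝ) ^ 3 * t + (s : ℝ) * (t : ℝ) ^ 3) with hc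
  have hcnn : 0 ≤ c := Real.sqrt_nonneg _
  have hargnn : (0:ℝ) ≤ (s : ℝ) ^ 3 * t + (s : ℝ) * (t : ℝ) ^ 3 := by positivity
  have hw2 : w ^ 2 = (s : ℝ) ^ 2 + (t : ℝ) ^ 2 := Real.sq_sqrt (by positivity)
  have hkval : k = (s : ℝ) ^ 3 * t + (s : ℝ) * (t : ℝ) ^ 3 := by
    rw [hk, hw2]; ring
  have hc2 : c ^ 2 = k := by rw [hc, Real.sq_sqrt hargnn, hkval]
  have habs : ∀ i, hA.eigenvalues i ^ 2 = c * |hA.eigenvalues i| := by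
    intro i
    have hcube := eig_cube hA k h3 i
    by_cases h0 : hA.eigenvalues i = 0
    · simp [h0]
    · have hsq : hA.eigenvalues i ^ 2 = k := by
        have : hA.eigenvalues i ^ 2 * hA.eigenvalues i = k * hA.eigenvalues i := by
          rw [← hcube]; ring
        exact mul_right_cancel₀ h0 this
      have habsv : |hA.eigenvalues i| = c := by
        rw [← Real.sqrt_sq_eq_abs, hsq, hkval, hc]
      rw [hsq, ← hc2, habsv]; ring
  have hEeq : somborEnergy G = ∑ i, |hA.eigenvalues i| := by
    rfl
  have hkey : c * somborEnergy G = 2 * c ^ 2 := by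
    rw [hEeq, Finset.mul_sum]
    rw [show ∑ i, c * |hA.eigenvalues i| = ∑ i, hA.eigenvalues i ^ 2 from
      Finset.sum_congr rfl fun i _ => (habs i).symm]
    rw [hsum, hc2]
  by_cases hc0 : c = 0
  · have hk0 : k = 0 := by rw [← hc2, hc0]; ring
    have hzero : ∀ i ∈ Finset.univ, |hA.eigenvalues i| = 0 := by
      intro i _
      have := habs i
      rw [hc0, zero_mul, pow_eq_zero_iff (two_ne_zero)] at this
      simp [this]
    rw [hEeq, Finset.sum_congr rfl hzero, hc0]
    simp
  · have := hkey
    rw [show 2 * c ^ 2 = c * (2 * c) by ring] at this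
    exact mul_left_cancel₀ hc0 this
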